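/- Let p1, p0, q1, q0 be polynomials in ℝ[x,y] (formally, MvPolynomial (Fin 2) ℝ) and define S0 = (p0 − q0)² − (p1 − q1)·(p0·q1 − q0·p1). Suppose v : Fin 2 → ℝ satisfies S0(v) = 0, (∂S0/∂x)(v) = 0, (∂S0/∂y)(v) = 0 and p1(v) ≠ q1(v), and set z0 = −(q0(v) − p0(v)) / (q1(v) − p1(v)). Then z0² + p1(v)·z0 + p0(v) = 0, z0² + q1(v)·z0 + q0(v) = 0, and the two gradient vectors (Fx, Fy, Fz) and (Gx, Gy, Gz) in ℝ³ are linearly dependent over ℝ, where Fx = z0·(∂p1/∂x)(v) + (∂p0/∂x)(v), Fy = z0·(∂p1/∂y)(v) + (∂p0/∂y)(v), Fz = 2·z0 + p1(v), and Gx, Gy, Gz are defined analogously with q1, q0 in place of p1, p0. (In particular, the two quadrics meet at (v, z0) and have the same tangent plane there.) -/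

import Mathlib

open MvPolynomial

/-- At a singular point of the cutcurve outside the line p1 = q1, the point
    (v, z0) lies on both quadrics and the gradients of f and g there are
    linearly dependent (same tangent plane). -/
theorem stmt_8 (p1 p0 q1 q0 : MvPolynomial (Fin 2) ℝ)
    (S0 : MvPolynomial (Fin 2) ℝ)
    (hS0 : S0 = (p0 - q0) ^ 2 - (p1 - q1) * (p0 * q1 - q0 * p1))
    (v : Fin 2 → ℝ)
    (hv : eval v S0 = 0)
    (hvx : eval v (pderiv (0 : Fin 2) S0) = 0)
    (hvy : eval v (pderiv (1 : Fin 2) S0) = 0)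
    (hne : eval v p1 ≠ eval v q1)
    (z0 : ℝ)
    (hz0 : z0 = -(eval v q0 - eval v p0) / (eval v q1 - eval v p1))
    (Fx Fy Fz Gx Gy Gz : ℝ)
    (hFx : Fx = z0 * eval v (pderiv (0 : Fin 2) p1) + eval v (pderiv (0 : Fin 2) p0))
    (hFy : Fy = z0 * eval v (pderiv (1 : Fin 2) p1) + eval v (pderiv (1 : Fin 2) p0))
    (hFz : Fz = 2 * z0 + eval v p1)
    (hGx : Gx = z0 * eval v (pderiv (0 : Fin 2) q1) + eval v (pderiv (0 : Fin 2) q0))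
    (hGy : Gy = z0 * eval v (pderiv (1 : Fin 2) q1) + eval v (pderiv (1 : Fin 2) q0))
    (hGz : Gz = 2 * z0 + eval v q1) :
    z0 ^ 2 + eval v p1 * z0 + eval v p0 = 0 ∧
    z0 ^ 2 + eval v q1 * z0 + eval v q0 = 0 ∧
    ¬ LinearIndependent ℝ ![(![Fx, Fy, Fz] : Fin 3 → ℝ), ![Gx, Gy, Gz]] := by
  set a := eval v p1
  set b := eval v p0
  set c := eval v q1
  set d := eval v q0
  set a' := eval v (pderiv (0 : Fin 2) p1)
  set b' := eval v (pderiv (0 : Fin 2) p0)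
  set c' := eval v (pderiv (0 : Fin 2) q1)
  set d' := eval v (pderiv (0 : Fin 2) q0)
  set ay := eval v (pderiv (1 : Fin 2) p1)
  set by' := eval v (pderiv (1 : Fin 2) p0)
  set cy := eval v (pderiv (1 : Fin 2) q1)
  set dy := eval v (pderiv (1 : Fin 2) q0)
  have hd1 : c - a ≠ 0 := sub_ne_zero.mpr (Ne.symm hne)
  have hz0' : z0 * (c - a) = b - d := by
    rw [hz0]; field_simp; ring
  simp only [hS0, pow_two, map_sub, pderiv_mul, eval_sub, eval_mul, eval_add] at hv hvx hvy
  have h1 : z0 ^ 2 + a * z0 + b = 0 := by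
    have key : (c - a) ^ 2 * (z0 ^ 2 + a * z0 + b) = 0 := by
      linear_combination hv + (z0 * (c-a) + (b - d) + a * (c - a)) * hz0'
    rcases mul_eq_zero.mp key with h | h
    · exact absurd h (pow_ne_zero _ hd1)
    · exact h
  have h2 : z0 ^ 2 + c * z0 + d = 0 := by
    linear_combination h1 + hz0'
  have hx : Gz * Fx - Fz * Gx = 0 := by
    have key : (c - a) * (Gz * Fx - Fz * Gx) = 0 := by
      rw [hFx, hFz, hGx, hGz]
      linear_combination hvx + (2*(b' - d') - a*(a' - c')) * hz0' +
        ((c - a)*(a' - 2*c')) * h1 + ((c - a)*a') * h2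
    exact (mul_eq_zero.mp key).resolve_left hd1
  have hy : Gz * Fy - Fz * Gy = 0 := by
    have key : (c - a) * (Gz * Fy - Fz * Gy) = 0 := by
      rw [hFy, hFz, hGy, hGz]
      linear_combination hvy + (2*(by' - dy) - a*(ay - cy)) * hz0' +
        ((c - a)*(ay - 2*cy)) * h1 + ((c - a)*ay) * h2
    exact (mul_eq_zero.mp key).resolve_left hd1
  refine ⟨h1, h2, ?_⟩
  intro hli
  rw [Fintype.linearIndependent_iff] at hli
  have hsum : ∑ i : Fin 2, (![Gz, -Fz] i) • (![(![Fx, Fy, Fz] : Fin 3 → ℝ), ![Gx, Gy, Gz]] i) = 0 := by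
    funext j
    fin_cases j <;>
      simp [Fin.sum_univ_two] <;> linarith [hx, hy]
  have h0 := hli ![Gz, -Fz] hsum 0
  have h1' := hli ![Gz, -Fz] hsum 1
  simp at h0 h1'
  apply hne
  have : Fz = Gz := by rw [h0, h1']
  rw [hFz, hGz] at this
  linarith
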